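/- The sequence (w^k) generated by the iteration (HᵀH + β T^k) w^{k+1} = Hᵀe is bounded: sup_k |w^k| < ∞. -/

import Mathlib

open scoped Matrix

theorem iterates_bounded
    (n m : ℕ) (H : Matrix (Fin n) (Fin m) ℝ) (e : Fin n → ℝ)
    (β p ε : ℝ) (hβ : 0 < β) (hp0 : 0 < p) (hp1 : p ≤ 1) (hε : 0 < ε)
    (w : ℕ → Fin m → ℝ)
    (hiter : ∀ k : ℕ, ∀ j : Fin m,
      H.transpose.mulVec (H.mulVec (w (k + 1))) j
        + β * (p / max (ε ^ (2 - p)) (|w k j| ^ (2 - p))) * w (k + 1) j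
        = H.transpose.mulVec e j) :
    ∃ C : ℝ, ∀ k : ℕ, (∑ j, (w k j) ^ 2) ≤ C := by
  classical
  set S : ℝ := (∑ i, (e i) ^ 2) / 4 with hSdef
  have hS0 : 0 ≤ S := by positivity
  set K : ℝ := S / (β * p) with hKdef
  have hK0 : 0 ≤ K := by positivity
  set B : ℝ := 1 + ε + (1 + K) ^ (1 / p) + ∑ j, |w 0 j| with hBdef
  have hpow0 : (0:ℝ) < (1 + K) ^ (1 / p) := Real.rpow_pos_of_pos (by linarith) _
  have hsum0 : (0:ℝ) ≤ ∑ j, |w 0 j| := Finset.sum_nonneg fun j _ => abs_nonneg _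
  have hB1 : (1:ℝ) ≤ B := by rw [hBdef]; linarith
  have hB0 : (0:ℝ) < B := lt_of_lt_of_le one_pos hB1
  have hεB : ε ≤ B := by rw [hBdef]; linarith
  have hBp : K ≤ B ^ p := by
    have h1 : (1 + K) ^ (1 / p) ≤ B := by rw [hBdef]; linarith
    have h2 : ((1 + K) ^ (1 / p)) ^ p ≤ B ^ p :=
      Real.rpow_le_rpow hpow0.le h1 hp0.le
    rw [← Real.rpow_mul (by linarith : (0:ℝ) ≤ 1 + K),
      one_div_mul_cancel hp0.ne', Real.rpow_one] at h2
    linarith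
  -- denominators
  have hD : ∀ k (j : Fin m), 0 < max (ε ^ (2 - p)) (|w k j| ^ (2 - p)) :=
    fun k j => lt_max_of_lt_left (Real.rpow_pos_of_pos hε _)
  -- key estimate
  have key : ∀ k (j : Fin m),
      (w (k + 1) j) ^ 2 ≤ K * max (ε ^ (2 - p)) (|w k j| ^ (2 - p)) := by
    intro k j
    set v : Fin m → ℝ := w (k + 1) with hv
    set u : Fin n → ℝ := H.mulVec v with hu
    have hsum : (∑ j, H.transpose.mulVec u j * v j)
        + (∑ j, β * (p / max (ε ^ (2 - p)) (|w k j| ^ (2 - p))) * (v j) ^ 2)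
        = ∑ j, H.transpose.mulVec e j * v j := by
      rw [← Finset.sum_add_distrib]
      apply Finset.sum_congr rfl
      intro j _
      linear_combination (v j) * (hiter k j)
    have e1 : (∑ j, H.transpose.mulVec u j * v j) = u ⬝ᵥ u := by
      have : (∑ j, H.transpose.mulVec u j * v j) = (H.transpose.mulVec u) ⬝ᵥ v := rfl
      rw [this, Matrix.mulVec_transpose, ← Matrix.dotProduct_mulVec, ← hu]
    have e2 : (∑ j, H.transpose.mulVec e j * v j) = e ⬝ᵥ u := by
      have : (∑ j, H.transpose.mulVec e j * v j) = (H.transpose.mulVec e) ⬝ᵥ v := rfl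
      rw [this, Matrix.mulVec_transpose, ← Matrix.dotProduct_mulVec, ← hu]
    rw [e1, e2] at hsum
    have h2 : (∑ j, β * (p / max (ε ^ (2 - p)) (|w k j| ^ (2 - p))) * (v j) ^ 2) ≤ S := by
      have : e ⬝ᵥ u - u ⬝ᵥ u ≤ S := by
        rw [dotProduct, dotProduct, hSdef, Finset.sum_div,
          ← Finset.sum_sub_distrib]
        exact Finset.sum_le_sum fun i _ => by nlinarith [sq_nonneg (e i - 2 * u i)]
      linarith
    have hterm : β * (p / max (ε ^ (2 - p)) (|w k j| ^ (2 - p))) * (v j) ^ 2 ≤ S := by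
      refine le_trans (Finset.single_le_sum (f := fun j =>
        β * (p / max (ε ^ (2 - p)) (|w k j| ^ (2 - p))) * (v j) ^ 2) ?_ (Finset.mem_univ j)) h2
      intro i _
      have := hD k i
      positivity
    set D : ℝ := max (ε ^ (2 - p)) (|w k j| ^ (2 - p)) with hDdef
    have hDpos : 0 < D := hD k j
    rw [hKdef, div_mul_eq_mul_div, le_div_iff₀ (by positivity)]
    have hc : p / D * D = p := div_mul_cancel₀ p hDpos.ne'
    have h3 : β * (p / D) * v j ^ 2 * D ≤ S * D :=
      mul_le_mul_of_nonneg_right hterm hDpos.le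
    have h4 : v j ^ 2 * (β * p) = β * (p / D) * v j ^ 2 * D := by
      field_simp
    linarith
  -- boundedness by induction
  have bdd : ∀ k (j : Fin m), |w k j| ≤ B := by
    intro k
    induction k with
    | zero =>
      intro j
      calc |w 0 j| ≤ ∑ j', |w 0 j'| :=
            Finset.single_le_sum (f := fun i => |w 0 i|)
              (fun i _ => abs_nonneg _) (Finset.mem_univ j)
        _ ≤ B := by rw [hBdef]; linarith
    | succ k ih =>
      intro j
      have h1 : (w (k + 1) j) ^ 2 ≤ K * max (ε ^ (2 - p)) (|w k j| ^ (2 - p)) := key k j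
      have hexp : (0:ℝ) ≤ 2 - p := by linarith
      have hm : max (ε ^ (2 - p)) (|w k j| ^ (2 - p)) ≤ B ^ (2 - p) := by
        apply max_le
        · exact Real.rpow_le_rpow hε.le hεB hexp
        · exact Real.rpow_le_rpow (abs_nonneg _) (ih j) hexp
      have h2 : (w (k + 1) j) ^ 2 ≤ B ^ p * B ^ (2 - p) := by
        calc (w (k + 1) j) ^ 2 ≤ K * max (ε ^ (2 - p)) (|w k j| ^ (2 - p)) := h1
          _ ≤ K * B ^ (2 - p) := by
              apply mul_le_mul_of_nonneg_left hm hK0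
          _ ≤ B ^ p * B ^ (2 - p) := by
              apply mul_le_mul_of_nonneg_right hBp (Real.rpow_nonneg hB0.le _)
      rw [← Real.rpow_add hB0] at h2
      have hBB : B ^ (p + (2 - p)) = B ^ 2 := by
        rw [show p + (2 - p) = ((2:ℕ):ℝ) by push_cast; ring, Real.rpow_natCast]
      rw [hBB] at h2
      nlinarith [sq_abs (w (k + 1) j), abs_nonneg (w (k + 1) j)]
  refine ⟨m * B ^ 2, fun k => ?_⟩
  calc (∑ j, (w k j) ^ 2) ≤ ∑ _j : Fin m, B ^ 2 := by
        apply Finset.sum_le_sum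
        intro j _
        nlinarith [bdd k j, abs_nonneg (w k j), sq_abs (w k j)]
    _ = m * B ^ 2 := by rw [Finset.sum_const, Finset.card_univ, Fintype.card_fin, nsmul_eq_mul]
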